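/- Let $G$ be an alternating directed graph on vertex set $[n]$ with at least one edge, whose underlying undirected graph has $r$ connected components. Then the polytope $Q_G = \mathrm{conv}\{\mathbf e_i - \mathbf e_j : (i,j) \in E(G)\} \subset \mathbb R^n$ has dimension $n - r - 1$. -/

import Mathlib

/-- The vector `e_i - e_j` associated to the directed edge `e = (i, j)`. -/
def vecOf (n : ℕ) (e : Fin n × Fin n) : Fin n → ℝ :=
  fun k => (if k = e.1 then 1 else 0) - (if k = e.2 then 1 else 0)

/-- The root polytope `Q_G = conv{e_i - e_j : (i,j) ∈ E(G)}`. -/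
def Qp (n : ℕ) (E : Set (Fin n × Fin n)) : Set (Fin n → ℝ) :=
  convexHull ℝ (vecOf n '' E)

/-- The underlying undirected (simple) graph of a directed graph given by its edge set. -/
def underlying {n : ℕ} (E : Set (Fin n × Fin n)) : SimpleGraph (Fin n) where
  Adj u v := u ≠ v ∧ ((u, v) ∈ E ∨ (v, u) ∈ E)
  symm := ⟨fun _ _ h => ⟨h.1.symm, h.2.symm⟩⟩
  loopless := ⟨fun _ h => h.1 rfl⟩

open Module Submodule Finset

section Aux

variable {n : ℕ} (E : Set (Fin n × Fin n))

/-- Standard basis vector. -/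
def ev (n : ℕ) (v : Fin n) : Fin n → ℝ := fun k => if k = v then 1 else 0

lemma sum_if_indicator (P : Fin n → Prop) [DecidablePred P] (v : Fin n) :
    (∑ i, if P i then (if i = v then (1:ℝ) else 0) else 0) = if P v then 1 else 0 := by
  rw [Finset.sum_eq_single v]
  · simp
  · intro i _ hiv
    split_ifs with h1 h2 <;> simp_all
  · simp

open scoped Classical in
/-- Sum of coordinates over each connected component, as a linear map. -/
noncomputable def Phi : (Fin n → ℝ) →ₗ[ℝ] ((underlying E).ConnectedComponent → ℝ) where
  toFun x := fun C => ∑ i, if (underlying E).connectedComponentMk i = C then x i else 0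
  map_add' x y := by
    funext C
    rw [Pi.add_apply, ← Finset.sum_add_distrib]
    exact Finset.sum_congr rfl fun i _ => by split <;> simp
  map_smul' a x := by
    funext C
    simp only [RingHom.id_apply, Pi.smul_apply, smul_eq_mul, Finset.mul_sum]
    exact Finset.sum_congr rfl fun i _ => by split <;> simp

open scoped Classical in
lemma Phi_apply (x : Fin n → ℝ) (C : (underlying E).ConnectedComponent) :
    Phi E x C = ∑ i, if (underlying E).connectedComponentMk i = C then x i else 0 := by
  rfl

open scoped Classical in
lemma Phi_ev (v : Fin n) :
    Phi E (ev n v) = fun C => if (underlying E).connectedComponentMk v = C then 1 else 0 := by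
  funext C
  rw [Phi_apply]
  simpa [ev] using sum_if_indicator (fun i => (underlying E).connectedComponentMk i = C) v

lemma vecOf_eq_sub (e : Fin n × Fin n) : vecOf n e = ev n e.1 - ev n e.2 := by
  funext k; simp [vecOf, ev]

lemma Phi_vecOf (halt : ∀ i j k : Fin n, (i, j) ∈ E → (j, k) ∈ E → False)
    {e : Fin n × Fin n} (he : e ∈ E) : Phi E (vecOf n e) = 0 := by
  obtain ⟨i, j⟩ := e
  have hij : i ≠ j := by
    rintro rfl
    exact halt i i i he he
  have hadj : (underlying E).Adj i j := ⟨hij, Or.inl he⟩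
  have hcc : (underlying E).connectedComponentMk i = (underlying E).connectedComponentMk j :=
    SimpleGraph.ConnectedComponent.eq.mpr hadj.reachable
  rw [vecOf_eq_sub, map_sub, Phi_ev, Phi_ev]
  funext C
  rw [Pi.sub_apply, hcc, sub_self]
  rfl

lemma span_le_ker_Phi (halt : ∀ i j k : Fin n, (i, j) ∈ E → (j, k) ∈ E → False) :
    span ℝ (vecOf n '' E) ≤ LinearMap.ker (Phi E) := by
  rw [span_le]
  rintro _ ⟨e, he, rfl⟩
  exact LinearMap.mem_ker.mpr (Phi_vecOf E halt he)

lemma ker_Phi_le_span : LinearMap.ker (Phi E) ≤ span ℝ (vecOf n '' E) := by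
  classical
  intro x hx
  set W : Submodule ℝ (Fin n → ℝ) := span ℝ (vecOf n '' E) with hW
  -- step: adjacent vertices have equal basis vectors modulo W
  have step : ∀ a b : Fin n, (underlying E).Adj a b → W.mkQ (ev n a) = W.mkQ (ev n b) := by
    intro a b hab
    have hmem : ev n a - ev n b ∈ W := by
      rcases hab.2 with h | h
      · have h1 : vecOf n (a, b) ∈ W := subset_span ⟨(a, b), h, rfl⟩
        simpa [vecOf_eq_sub] using h1
      · have h1 : vecOf n (b, a) ∈ W := subset_span ⟨(b, a), h, rfl⟩
        have h2 := W.neg_mem h1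
        simpa [vecOf_eq_sub, neg_sub] using h2
    simpa [Submodule.mkQ_apply] using (Submodule.Quotient.eq W).mpr hmem
  have key : ∀ a b : Fin n,
      (underlying E).connectedComponentMk a = (underlying E).connectedComponentMk b →
      W.mkQ (ev n a) = W.mkQ (ev n b) := by
    intro a b hab
    have hre : (underlying E).Reachable a b := SimpleGraph.ConnectedComponent.eq.mp hab
    clear hab
    obtain ⟨w⟩ := hre
    induction w with
    | nil => rfl
    | cons h p ih => exact (step _ _ h).trans ih
  haveI : Fintype ((underlying E).ConnectedComponent) := Fintype.ofFinite _
  choose rep hrep using fun C : (underlying E).ConnectedComponent => C.exists_rep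
  have hx0 : ∀ C, Phi E x C = 0 := fun C => congrFun (LinearMap.mem_ker.mp hx) C
  have hxsum : x = ∑ i, x i • ev n i := by
    funext k
    rw [Finset.sum_apply]
    rw [Finset.sum_eq_single k]
    · simp [ev]
    · intro b _ hbk
      simp [ev, Ne.symm hbk]
    · simp
  have hmk : W.mkQ x = 0 := by
    have c1 : W.mkQ x = ∑ i, x i • W.mkQ (ev n i) := by
      conv_lhs => rw [hxsum]
      simp [map_sum, map_smul]
    have c2 : ∀ i : Fin n, W.mkQ (ev n i) =
        W.mkQ (ev n (rep ((underlying E).connectedComponentMk i))) := by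
      intro i
      exact key i _ (hrep _).symm
    have c3 : W.mkQ x = ∑ C : (underlying E).ConnectedComponent,
        ∑ i ∈ Finset.univ.filter (fun i => (underlying E).connectedComponentMk i = C),
          x i • W.mkQ (ev n (rep ((underlying E).connectedComponentMk i))) := by
      rw [c1, ← Finset.sum_fiberwise Finset.univ
        (fun i => (underlying E).connectedComponentMk i) _]
      exact Finset.sum_congr rfl fun C _ => Finset.sum_congr rfl fun i _ => by rw [← c2]
    have c4 : W.mkQ x = ∑ C : (underlying E).ConnectedComponent,
        (Phi E x C) • W.mkQ (ev n (rep C)) := by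
      rw [c3]
      refine Finset.sum_congr rfl fun C _ => ?_
      rw [Phi_apply, ← Finset.sum_filter, Finset.sum_smul]
      refine Finset.sum_congr rfl fun i hi => ?_
      rw [(Finset.mem_filter.mp hi).2]
    rw [c4]
    simp [hx0]
  have := (Submodule.Quotient.mk_eq_zero W).mp (by simpa [Submodule.mkQ_apply] using hmk)
  exact this

lemma Phi_surjective : Function.Surjective (Phi E) := by
  classical
  haveI : Fintype ((underlying E).ConnectedComponent) := Fintype.ofFinite _
  choose rep hrep using fun C : (underlying E).ConnectedComponent => C.exists_rep
  intro g
  refine ⟨∑ C, g C • ev n (rep C), ?_⟩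
  rw [map_sum]
  funext C'
  rw [Finset.sum_apply]
  have : ∀ C, (Phi E (g C • ev n (rep C))) C' = if C = C' then g C else 0 := by
    intro C
    have h3 : (underlying E).connectedComponentMk (rep C) = C := hrep C
    rw [map_smul]
    simp only [Pi.smul_apply, Phi_ev, h3, smul_eq_mul]
    split <;> simp_all
  rw [Finset.sum_congr rfl fun C _ => this C]
  simp

lemma finrank_span_vecOf (halt : ∀ i j k : Fin n, (i, j) ∈ E → (j, k) ∈ E → False) :
    finrank ℝ (span ℝ (vecOf n '' E)) =
      n - Nat.card ((underlying E).ConnectedComponent) := by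
  classical
  haveI : Fintype ((underlying E).ConnectedComponent) := Fintype.ofFinite _
  have h1 := LinearMap.finrank_range_add_finrank_ker (Phi E)
  rw [LinearMap.range_eq_top.mpr (Phi_surjective E), finrank_top,
    Module.finrank_fintype_fun_eq_card, Module.finrank_fintype_fun_eq_card,
    Fintype.card_fin] at h1
  have hker : LinearMap.ker (Phi E) = span ℝ (vecOf n '' E) :=
    le_antisymm (ker_Phi_le_span E) (span_le_ker_Phi E halt)
  rw [← hker, Nat.card_eq_fintype_card]
  omega

open scoped Classical in
/-- The "sources indicator" functional. -/
noncomputable def srcF : (Fin n → ℝ) →ₗ[ℝ] ℝ where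
  toFun x := ∑ i, if (∃ j, (i, j) ∈ E) then x i else 0
  map_add' x y := by
    rw [← Finset.sum_add_distrib]
    exact Finset.sum_congr rfl fun i _ => by split <;> simp
  map_smul' a x := by
    simp only [RingHom.id_apply, smul_eq_mul, Finset.mul_sum]
    exact Finset.sum_congr rfl fun i _ => by split <;> simp

open scoped Classical in
lemma srcF_vecOf (halt : ∀ i j k : Fin n, (i, j) ∈ E → (j, k) ∈ E → False)
    {e : Fin n × Fin n} (he : e ∈ E) : srcF E (vecOf n e) = 1 := by
  obtain ⟨i, j⟩ := e
  have hsrc : srcF E (vecOf n (i, j)) =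
      ∑ k, ((if (∃ j', (k, j') ∈ E) then (if k = i then (1:ℝ) else 0) else 0)
      - (if (∃ j', (k, j') ∈ E) then (if k = j then (1:ℝ) else 0) else 0)) := by
    simp only [srcF, LinearMap.coe_mk, AddHom.coe_mk]
    refine Finset.sum_congr rfl fun k _ => ?_
    simp only [vecOf]
    split <;> simp
  rw [hsrc, Finset.sum_sub_distrib, sum_if_indicator, sum_if_indicator]
  have hi : ∃ j', (i, j') ∈ E := ⟨j, he⟩
  have hj : ¬ ∃ j', (j, j') ∈ E := by
    rintro ⟨k, hk⟩
    exact halt i j k he hk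
  simp [hi, hj]

lemma finrank_vectorSpan_add_one (s : Set (Fin n → ℝ)) (f : (Fin n → ℝ) →ₗ[ℝ] ℝ)
    (hs : s.Nonempty) (hf : ∀ v ∈ s, f v = 1) :
    finrank ℝ (vectorSpan ℝ s) + 1 = finrank ℝ (span ℝ s) := by
  obtain ⟨v0, hv0⟩ := hs
  have hker : vectorSpan ℝ s ≤ LinearMap.ker f := by
    rw [vectorSpan_def, span_le]
    rintro _ ⟨a, ha, b, hb, rfl⟩
    simp [LinearMap.mem_ker, vsub_eq_sub, hf a ha, hf b hb]
  have hv0ne : v0 ≠ 0 := by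
    intro h
    have := hf v0 hv0
    rw [h, map_zero] at this
    exact one_ne_zero this.symm
  have hspan : span ℝ s = vectorSpan ℝ s ⊔ span ℝ {v0} := by
    apply le_antisymm
    · rw [span_le]
      intro v hv
      have hsplit : v = (v - v0) + v0 := by abel
      rw [hsplit]
      refine Submodule.add_mem _ ?_ ?_
      · exact le_sup_left (α := Submodule ℝ (Fin n → ℝ)) (vsub_mem_vectorSpan ℝ hv hv0)
      · exact le_sup_right (α := Submodule ℝ (Fin n → ℝ)) (subset_span rfl)
    · refine sup_le ?_ ?_
      · rw [vectorSpan_def, span_le]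
        rintro _ ⟨a, ha, b, hb, rfl⟩
        exact Submodule.sub_mem _ (subset_span ha) (subset_span hb)
      · rw [span_le]
        rintro _ rfl
        exact subset_span hv0
  have hinf : vectorSpan ℝ s ⊓ span ℝ {v0} = ⊥ := by
    rw [eq_bot_iff]
    rintro x ⟨hx1, hx2⟩
    obtain ⟨c, rfl⟩ := Submodule.mem_span_singleton.mp hx2
    have hfx : f (c • v0) = 0 := hker hx1
    rw [map_smul, hf v0 hv0, smul_eq_mul, mul_one] at hfx
    simp [hfx]
  have hdim := Submodule.finrank_sup_add_finrank_inf_eq (vectorSpan ℝ s) (span ℝ {v0})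
  rw [hinf, finrank_bot, finrank_span_singleton hv0ne, add_zero] at hdim
  rw [hspan, hdim]

end Aux

theorem stmt2 (n r : ℕ) (E : Set (Fin n × Fin n))
    (halt : ∀ i j k : Fin n, (i, j) ∈ E → (j, k) ∈ E → False)
    (hne : E.Nonempty)
    (hr : Nat.card (underlying E).ConnectedComponent = r) :
    Module.finrank ℝ (affineSpan ℝ (Qp n E)).direction = n - r - 1 := by
  rw [Qp, affineSpan_convexHull, direction_affineSpan]
  have h1 : finrank ℝ (span ℝ (vecOf n '' E)) = n - r := by
    rw [← hr]; exact finrank_span_vecOf E halt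
  have h2 := finrank_vectorSpan_add_one (vecOf n '' E) (srcF E) (hne.image (vecOf n))
    (by rintro _ ⟨e, he, rfl⟩; exact srcF_vecOf E halt he)
  omega
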